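/- Let f : ℝⁿ → ℝ be a C¹ function and c ∈ ℝ. Let Λ⁺ ⊆ S^{n-1} be a finite set of unit vectors, and let A be an n×n real diagonal matrix whose diagonal entries are positive and pairwise distinct, such that no element of X_c^{∞,+} is an eigenvector of A and, for each u ∈ Λ⁺, neither Au/‖Au‖ nor −Au/‖Au‖ belongs to V(u). Then there exist α, β, γ ∈ (0,1), R > 0, ε > 0 and η > 0 such that for every x ∈ ℝⁿ with ‖x‖ > R and |f(x) − c| < ε: (i) α‖x‖ < ⟨Ax/‖Ax‖, x⟩ < β‖x‖; and (ii) for each u ∈ Λ⁺ with ‖x/‖x‖ − u‖ < η, if ∇f(x) ≠ 0 then |⟨Ax/‖Ax‖, ∇f(x)/‖∇f(x)‖⟩| < γ. -/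

import Mathlib

open Filter Topology
open scoped RealInnerProductSpace

/-- The action of an `n × n` real matrix on Euclidean space `ℝⁿ`. -/
noncomputable def matApply {n : ℕ} (A : Matrix (Fin n) (Fin n) ℝ)
    (x : EuclideanSpace ℝ (Fin n)) : EuclideanSpace ℝ (Fin n) :=
  (EuclideanSpace.equiv (Fin n) ℝ).symm (A.mulVec (EuclideanSpace.equiv (Fin n) ℝ x))

/-- The set `X_c^{∞,+}`: unit vectors `u` which are limits of directions `x_k/‖x_k‖` of
sequences with `‖x_k‖ → ∞` and `f(x_k) → c`. -/
def dirsAtInfinity {n : ℕ} (f : EuclideanSpace ℝ (Fin n) → ℝ) (c : ℝ) :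
    Set (EuclideanSpace ℝ (Fin n)) :=
  {u | ‖u‖ = 1 ∧ ∃ x : ℕ → EuclideanSpace ℝ (Fin n),
    Tendsto (fun k => ‖x k‖) atTop atTop ∧
    Tendsto (fun k => (‖x k‖)⁻¹ • x k) atTop (𝓝 u) ∧
    Tendsto (fun k => f (x k)) atTop (𝓝 c)}

/-- The set `V(u)`: unit vectors `ν` which are limits of normalised gradients
`∇f(x_k)/‖∇f(x_k)‖` along sequences with `‖x_k‖ → ∞`, `x_k/‖x_k‖ → u` and `f(x_k) → c`. -/
def limGradDirs {n : ℕ} (f : EuclideanSpace ℝ (Fin n) → ℝ) (c : ℝ)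
    (u : EuclideanSpace ℝ (Fin n)) : Set (EuclideanSpace ℝ (Fin n)) :=
  {ν | ‖ν‖ = 1 ∧ ∃ x : ℕ → EuclideanSpace ℝ (Fin n),
    (∀ k, gradient f (x k) ≠ 0) ∧
    Tendsto (fun k => ‖x k‖) atTop atTop ∧
    Tendsto (fun k => (‖x k‖)⁻¹ • x k) atTop (𝓝 u) ∧
    Tendsto (fun k => f (x k)) atTop (𝓝 c) ∧
    Tendsto (fun k => (‖gradient f (x k)‖)⁻¹ • gradient f (x k)) atTop (𝓝 ν)}

lemma matApply_coord {n : ℕ} (d : Fin n → ℝ) (x : EuclideanSpace ℝ (Fin n)) (i : Fin n) :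
    matApply (Matrix.diagonal d) x i = d i * x i := by
  simp [matApply, Matrix.mulVec_diagonal]

lemma matApply_inner {n : ℕ} (d : Fin n → ℝ) (x y : EuclideanSpace ℝ (Fin n)) :
    ⟪matApply (Matrix.diagonal d) x, y⟫ = ∑ i, d i * x i * y i := by
  rw [PiLp.inner_apply]
  simp [matApply_coord, RCLike.inner_apply]
  exact Finset.sum_congr rfl fun i _ => by ring

lemma matApply_smul {n : ℕ} (d : Fin n → ℝ) (t : ℝ) (x : EuclideanSpace ℝ (Fin n)) :
    matApply (Matrix.diagonal d) (t • x) = t • matApply (Matrix.diagonal d) x := by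
  ext i
  simp [matApply_coord]
  ring

lemma matApply_cont {n : ℕ} (A : Matrix (Fin n) (Fin n) ℝ) :
    Continuous (matApply A) := by
  have : matApply A = fun x => Matrix.toEuclideanLin A x := by
    funext x; rfl
  rw [this]
  exact (Matrix.toEuclideanLin A).continuous_of_finiteDimensional

lemma matApply_inner_self_ge {n : ℕ} (d : Fin n → ℝ) (a : ℝ) (ha : ∀ i, a ≤ d i)
    (x : EuclideanSpace ℝ (Fin n)) :
    a * ‖x‖ ^ 2 ≤ ⟪matApply (Matrix.diagonal d) x, x⟫ := by
  rw [matApply_inner]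
  have h : ‖x‖ ^ 2 = ∑ i, x i ^ 2 := by
    rw [← real_inner_self_eq_norm_sq, PiLp.inner_apply]
    simp [RCLike.inner_apply, sq]
  rw [h, Finset.mul_sum]
  apply Finset.sum_le_sum
  intro i _
  have : a * x i ^ 2 ≤ d i * x i ^ 2 :=
    mul_le_mul_of_nonneg_right (ha i) (sq_nonneg _)
  nlinarith [this]

lemma matApply_norm_le {n : ℕ} (d : Fin n → ℝ) (b : ℝ) (hb : 0 ≤ b) (hd : ∀ i, |d i| ≤ b)
    (x : EuclideanSpace ℝ (Fin n)) :
    ‖matApply (Matrix.diagonal d) x‖ ≤ b * ‖x‖ := by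
  have h1 : ‖matApply (Matrix.diagonal d) x‖ ^ 2 ≤ (b * ‖x‖) ^ 2 := by
    rw [← real_inner_self_eq_norm_sq, matApply_inner]
    have h : ‖x‖ ^ 2 = ∑ i, x i ^ 2 := by
      rw [← real_inner_self_eq_norm_sq, PiLp.inner_apply]
      simp [RCLike.inner_apply, sq]
    rw [mul_pow, h, Finset.mul_sum]
    apply Finset.sum_le_sum
    intro i _
    have h2 : d i * x i * (d i * x i) = (d i)^2 * x i ^2 := by ring
    have h3 : (d i)^2 ≤ b^2 := by
      have h4 := sq_abs (d i)
      have h5 := hd i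
      have h6 : (0:ℝ) ≤ |d i| := abs_nonneg _
      nlinarith
    rw [matApply_coord, h2]
    nlinarith [sq_nonneg (x i)]
  have hbx : (0:ℝ) ≤ b * ‖x‖ := by positivity
  nlinarith [norm_nonneg (matApply (Matrix.diagonal d) x)]

lemma matApply_ne_zero {n : ℕ} (d : Fin n → ℝ) (hpos : ∀ i, 0 < d i)
    {x : EuclideanSpace ℝ (Fin n)} (hx : x ≠ 0) :
    matApply (Matrix.diagonal d) x ≠ 0 := by
  rcases Nat.eq_zero_or_pos n with hn | hn
  · subst hn
    exact absurd (by ext i; exact i.elim0 : x = 0) hx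
  haveI : NeZero n := ⟨hn.ne'⟩
  set a : ℝ := Finset.univ.inf' Finset.univ_nonempty d with ha
  have hal : ∀ i, a ≤ d i := fun i => Finset.inf'_le _ (Finset.mem_univ i)
  have hap : 0 < a := by
    obtain ⟨i, _, hi⟩ := Finset.exists_mem_eq_inf' Finset.univ_nonempty d
    rw [ha, hi]; exact hpos i
  intro h0
  have := matApply_inner_self_ge d a hal x
  rw [h0] at this
  simp only [inner_zero_left] at this
  have hxn : 0 < ‖x‖ := norm_pos_iff.2 hx
  have : 0 < a * ‖x‖ ^ 2 := by positivity
  linarith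

lemma normalized_matApply_smul {n : ℕ} (d : Fin n → ℝ) (x : EuclideanSpace ℝ (Fin n))
    (hx : x ≠ 0) :
    (‖matApply (Matrix.diagonal d) ((‖x‖)⁻¹ • x)‖)⁻¹ • matApply (Matrix.diagonal d) ((‖x‖)⁻¹ • x)
      = (‖matApply (Matrix.diagonal d) x‖)⁻¹ • matApply (Matrix.diagonal d) x := by
  have hxn : (0:ℝ) < ‖x‖ := norm_pos_iff.2 hx
  rw [matApply_smul, norm_smul, smul_smul, norm_inv, norm_norm]
  congr 1
  rw [mul_comm]
  field_simp

lemma tendsto_normalized_matApply {n : ℕ} (d : Fin n → ℝ) (hpos : ∀ i, 0 < d i)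
    {y : ℕ → EuclideanSpace ℝ (Fin n)} {u : EuclideanSpace ℝ (Fin n)} (hu : u ≠ 0)
    (hy : Filter.Tendsto y atTop (𝓝 u)) :
    Filter.Tendsto (fun k => (‖matApply (Matrix.diagonal d) (y k)‖)⁻¹ •
        matApply (Matrix.diagonal d) (y k)) atTop
      (𝓝 ((‖matApply (Matrix.diagonal d) u‖)⁻¹ • matApply (Matrix.diagonal d) u)) := by
  have hDu := matApply_ne_zero d hpos hu
  have h1 : Filter.Tendsto (fun k => matApply (Matrix.diagonal d) (y k)) atTop
      (𝓝 (matApply (Matrix.diagonal d) u)) :=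
    ((matApply_cont (Matrix.diagonal d)).tendsto _).comp hy
  exact (h1.norm.inv₀ (norm_ne_zero_iff.2 hDu)).smul h1

lemma aux_tendsto_inv : Tendsto (fun k : ℕ => ((k:ℝ)+1)⁻¹) atTop (𝓝 0) :=
  tendsto_one_div_add_atTop_nhds_zero_nat.congr (by intro k; rw [one_div])

lemma aux_tendsto_beta : Tendsto (fun k : ℕ => 1 - ((k:ℝ)+2)⁻¹) atTop (𝓝 1) := by
  have h : Tendsto (fun k : ℕ => ((k:ℝ)+2)⁻¹) atTop (𝓝 0) := by
    apply Tendsto.inv_tendsto_atTop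
    exact tendsto_atTop_add_const_right _ 2 tendsto_natCast_atTop_atTop
  have := (tendsto_const_nhds (x := (1:ℝ)) (f := atTop (α := ℕ))).sub h
  simpa using this

lemma aux_beta_mem (k : ℕ) : (1 - ((k:ℝ)+2)⁻¹) ∈ Set.Ioo (0:ℝ) 1 := by
  constructor
  · have h1 : ((k:ℝ)+2)⁻¹ ≤ (2:ℝ)⁻¹ := by
      apply inv_anti₀ (by norm_num)
      have : (0:ℝ) ≤ (k:ℝ) := Nat.cast_nonneg k
      linarith
    linarith
  · have : (0:ℝ) < ((k:ℝ)+2)⁻¹ := by positivity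
    linarith

/-- If `x_k` is a sequence with `‖x_k‖ > k+1` and `|f x_k - c| < (k+1)⁻¹`, then
norms tend to infinity and values to `c`. -/
lemma aux_norm_tendsto {n : ℕ} {x : ℕ → EuclideanSpace ℝ (Fin n)}
    (hR : ∀ k : ℕ, ((k:ℝ)+1) < ‖x k‖) :
    Tendsto (fun k => ‖x k‖) atTop atTop :=
  tendsto_atTop_mono (fun k => (hR k).le)
    (tendsto_atTop_add_const_right _ 1 tendsto_natCast_atTop_atTop)

lemma aux_val_tendsto {n : ℕ} {f : EuclideanSpace ℝ (Fin n) → ℝ} {c : ℝ}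
    {x : ℕ → EuclideanSpace ℝ (Fin n)}
    (hf : ∀ k : ℕ, |f (x k) - c| < ((k:ℝ)+1)⁻¹) :
    Tendsto (fun k => f (x k)) atTop (𝓝 c) := by
  rw [tendsto_iff_dist_tendsto_zero]
  apply squeeze_zero (fun k => dist_nonneg)
    (fun k => ?_) aux_tendsto_inv
  rw [Real.dist_eq]
  exact (hf k).le

lemma claimBeta {n : ℕ} (f : EuclideanSpace ℝ (Fin n) → ℝ) (c : ℝ)
    (d : Fin n → ℝ) (hpos : ∀ i, 0 < d i)
    (heig : ∀ u ∈ dirsAtInfinity f c, ∀ t : ℝ,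
      matApply (Matrix.diagonal d) u ≠ t • u) :
    ∃ β ∈ Set.Ioo (0:ℝ) 1, ∃ R > (0:ℝ), ∃ ε > (0:ℝ),
      ∀ x : EuclideanSpace ℝ (Fin n), R < ‖x‖ → |f x - c| < ε →
        ⟪(‖matApply (Matrix.diagonal d) x‖)⁻¹ • matApply (Matrix.diagonal d) x, x⟫
          < β * ‖x‖ := by
  by_contra hcon
  push_neg at hcon
  have hx : ∀ k : ℕ, ∃ x : EuclideanSpace ℝ (Fin n), ((k:ℝ)+1) < ‖x‖ ∧
      |f x - c| < ((k:ℝ)+1)⁻¹ ∧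
      (1 - ((k:ℝ)+2)⁻¹) * ‖x‖ ≤
        ⟪(‖matApply (Matrix.diagonal d) x‖)⁻¹ • matApply (Matrix.diagonal d) x, x⟫ := by
    intro k
    exact hcon _ (aux_beta_mem k) _ (by positivity) _ (by positivity)
  choose x hR hfv hβ using hx
  have hxne : ∀ k, x k ≠ 0 := by
    intro k h0
    have := hR k
    rw [h0, norm_zero] at this
    have : (0:ℝ) ≤ (k:ℝ) := Nat.cast_nonneg k
    linarith [hR k, norm_zero (E := EuclideanSpace ℝ (Fin n))]
  have hxpos : ∀ k, (0:ℝ) < ‖x k‖ := fun k => norm_pos_iff.2 (hxne k)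
  set y : ℕ → EuclideanSpace ℝ (Fin n) := fun k => (‖x k‖)⁻¹ • x k with hy
  have hysph : ∀ k, y k ∈ Metric.sphere (0 : EuclideanSpace ℝ (Fin n)) 1 := by
    intro k
    rw [Metric.mem_sphere, dist_zero_right]
    exact norm_smul_inv_norm (hxne k)
  obtain ⟨u, husph, φ, hφ, hyu⟩ := (isCompact_sphere (0:EuclideanSpace ℝ (Fin n)) 1).tendsto_subseq hysph
  have hunorm : ‖u‖ = 1 := by
    rw [Metric.mem_sphere, dist_zero_right] at husph; exact husph
  have hune : u ≠ 0 := by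
    intro h; rw [h, norm_zero] at hunorm; norm_num at hunorm
  have humem : u ∈ dirsAtInfinity f c := by
    refine ⟨hunorm, x ∘ φ, ?_, ?_, ?_⟩
    · exact (aux_norm_tendsto hR).comp hφ.tendsto_atTop
    · exact hyu
    · exact (aux_val_tendsto hfv).comp hφ.tendsto_atTop
  -- the normalized image sequence tends to w
  set D := matApply (Matrix.diagonal d) with hD
  set w : EuclideanSpace ℝ (Fin n) := (‖D u‖)⁻¹ • D u with hw
  have hwu : Tendsto (fun k => ⟪(‖D (y (φ k))‖)⁻¹ • D (y (φ k)), y (φ k)⟫) atTop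
      (𝓝 ⟪w, u⟫) :=
    (tendsto_normalized_matApply d hpos hune hyu).inner hyu
  -- lower bound along the sequence
  have hlow : ∀ k, (1 - ((φ k:ℝ)+2)⁻¹) ≤ ⟪(‖D (y (φ k))‖)⁻¹ • D (y (φ k)), y (φ k)⟫ := by
    intro k
    have h1 := normalized_matApply_smul d (x (φ k)) (hxne (φ k))
    have h2 : ⟪(‖D (y (φ k))‖)⁻¹ • D (y (φ k)), y (φ k)⟫
        = (‖x (φ k)‖)⁻¹ * ⟪(‖D (x (φ k))‖)⁻¹ • D (x (φ k)), x (φ k)⟫ := by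
      rw [hy]
      simp only
      rw [h1, real_inner_smul_right]
    rw [h2]
    have h4 := hxpos (φ k)
    calc (1 - ((φ k:ℝ)+2)⁻¹)
        = (1 - ((φ k:ℝ)+2)⁻¹) * ‖x (φ k)‖ / ‖x (φ k)‖ := by field_simp
      _ ≤ ⟪(‖D (x (φ k))‖)⁻¹ • D (x (φ k)), x (φ k)⟫ / ‖x (φ k)‖ := by
          gcongr
          exact hβ (φ k)
      _ = (‖x (φ k)‖)⁻¹ * ⟪(‖D (x (φ k))‖)⁻¹ • D (x (φ k)), x (φ k)⟫ := by
          rw [div_eq_inv_mul]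
  -- pass to the limit
  have hβφ : Tendsto (fun k => 1 - ((φ k:ℝ)+2)⁻¹) atTop (𝓝 1) :=
    aux_tendsto_beta.comp hφ.tendsto_atTop
  have hge : (1:ℝ) ≤ ⟪w, u⟫ := le_of_tendsto_of_tendsto' hβφ hwu hlow
  have hwnorm : ‖w‖ = 1 := norm_smul_inv_norm (matApply_ne_zero d hpos hune)
  have hle : ⟪w, u⟫ ≤ 1 := by
    have := real_inner_le_norm w u
    rw [hwnorm, hunorm] at this
    linarith
  have heq : ⟪w, u⟫ = 1 := le_antisymm hle hge
  have : w = u := (inner_eq_one_iff_of_norm_eq_one hwnorm hunorm).1 heq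
  have hDune : D u ≠ 0 := matApply_ne_zero d hpos hune
  have h5 : ‖D u‖ • w = D u := by
    rw [hw, smul_smul, mul_inv_cancel₀ (norm_ne_zero_iff.2 hDune), one_smul]
  rw [this] at h5
  exact heig u humem (‖D u‖) h5.symm

lemma claimGamma {n : ℕ} (f : EuclideanSpace ℝ (Fin n) → ℝ) (c : ℝ)
    (Λ : Finset (EuclideanSpace ℝ (Fin n))) (hΛ : ∀ u ∈ Λ, ‖u‖ = 1)
    (d : Fin n → ℝ) (hpos : ∀ i, 0 < d i)
    (hV : ∀ u ∈ Λ,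
      (‖matApply (Matrix.diagonal d) u‖)⁻¹ • matApply (Matrix.diagonal d) u
        ∉ limGradDirs f c u ∧
      -((‖matApply (Matrix.diagonal d) u‖)⁻¹ • matApply (Matrix.diagonal d) u)
        ∉ limGradDirs f c u) :
    ∃ γ ∈ Set.Ioo (0:ℝ) 1, ∃ η > (0:ℝ), ∃ R > (0:ℝ), ∃ ε > (0:ℝ),
      ∀ x : EuclideanSpace ℝ (Fin n), R < ‖x‖ → |f x - c| < ε →
        ∀ u ∈ Λ, ‖(‖x‖)⁻¹ • x - u‖ < η → gradient f x ≠ 0 →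
          |⟪(‖matApply (Matrix.diagonal d) x‖)⁻¹ • matApply (Matrix.diagonal d) x,
             (‖gradient f x‖)⁻¹ • gradient f x⟫| < γ := by
  by_contra hcon
  push_neg at hcon
  have hx : ∀ k : ℕ, ∃ x : EuclideanSpace ℝ (Fin n), ((k:ℝ)+1) < ‖x‖ ∧
      |f x - c| < ((k:ℝ)+1)⁻¹ ∧ ∃ u ∈ Λ, ‖(‖x‖)⁻¹ • x - u‖ < ((k:ℝ)+1)⁻¹ ∧
        gradient f x ≠ 0 ∧
        (1 - ((k:ℝ)+2)⁻¹) ≤ |⟪(‖matApply (Matrix.diagonal d) x‖)⁻¹ •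
            matApply (Matrix.diagonal d) x,
            (‖gradient f x‖)⁻¹ • gradient f x⟫| := by
    intro k
    exact hcon _ (aux_beta_mem k) _ (by positivity) _ (by positivity) _ (by positivity)
  choose x hR hfv u huΛ hdist hgrad hγ using hx
  set D := matApply (Matrix.diagonal d) with hD
  have hxne : ∀ k, x k ≠ 0 := by
    intro k h0
    have h1 := hR k
    rw [h0, norm_zero] at h1
    have : (0:ℝ) ≤ (k:ℝ) := Nat.cast_nonneg k
    linarith
  -- pigeonhole: some v ∈ Λ occurs infinitely often
  have hfreq : ∃ v ∈ Λ, ∃ᶠ k in atTop, u k = v := by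
    by_contra h
    push_neg at h
    have h2 : ∀ᶠ k in atTop, ∀ v ∈ Λ, u k ≠ v := by
      rw [eventually_all_finset]
      intro v hv
      have := h v hv
      exact this
    obtain ⟨k, hk⟩ := h2.exists
    exact hk (u k) (huΛ k) rfl
  obtain ⟨v, hvΛ, hfr⟩ := hfreq
  obtain ⟨φ₀, hφ₀, hufix⟩ := Filter.extraction_of_frequently_atTop hfr
  -- extract convergent subsequence of normalized gradients
  set g : ℕ → EuclideanSpace ℝ (Fin n) :=
    fun k => (‖gradient f (x k)‖)⁻¹ • gradient f (x k) with hg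
  have hgsph : ∀ k, g (φ₀ k) ∈ Metric.sphere (0 : EuclideanSpace ℝ (Fin n)) 1 := by
    intro k
    rw [Metric.mem_sphere, dist_zero_right]
    exact norm_smul_inv_norm (hgrad (φ₀ k))
  obtain ⟨ν, hνsph, φ₁, hφ₁, hgν⟩ :=
    (isCompact_sphere (0:EuclideanSpace ℝ (Fin n)) 1).tendsto_subseq hgsph
  set ψ : ℕ → ℕ := φ₀ ∘ φ₁ with hψ
  have hψmono : StrictMono ψ := hφ₀.comp hφ₁
  have hνnorm : ‖ν‖ = 1 := by rwa [Metric.mem_sphere, dist_zero_right] at hνsph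
  have hvnorm : ‖v‖ = 1 := hΛ v hvΛ
  have hvne : v ≠ 0 := by intro h; rw [h, norm_zero] at hvnorm; norm_num at hvnorm
  -- normalized x tends to v along ψ
  have hxv : Tendsto (fun k => (‖x (ψ k)‖)⁻¹ • x (ψ k)) atTop (𝓝 v) := by
    rw [tendsto_iff_dist_tendsto_zero]
    apply squeeze_zero (fun k => dist_nonneg) (fun k => ?_)
      (aux_tendsto_inv.comp hψmono.tendsto_atTop)
    rw [dist_eq_norm]
    have h1 := hdist (ψ k)
    have h2 : u (ψ k) = v := hufix (φ₁ k)
    rw [h2] at h1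
    exact h1.le
  have hgν' : Tendsto (fun k => g (ψ k)) atTop (𝓝 ν) := hgν
  -- ν belongs to limGradDirs f c v
  have hνmem : ν ∈ limGradDirs f c v := by
    refine ⟨hνnorm, x ∘ ψ, fun k => hgrad (ψ k), ?_, hxv, ?_, hgν'⟩
    · exact (aux_norm_tendsto hR).comp hψmono.tendsto_atTop
    · exact (aux_val_tendsto hfv).comp hψmono.tendsto_atTop
  set w : EuclideanSpace ℝ (Fin n) := (‖D v‖)⁻¹ • D v with hw
  have hwnorm : ‖w‖ = 1 := norm_smul_inv_norm (matApply_ne_zero d hpos hvne)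
  -- the normalized D x tends to w along ψ
  have hWw : Tendsto (fun k => (‖D (x (ψ k))‖)⁻¹ • D (x (ψ k))) atTop (𝓝 w) := by
    have h1 := tendsto_normalized_matApply d hpos hvne hxv
    apply h1.congr
    intro k
    exact normalized_matApply_smul d (x (ψ k)) (hxne (ψ k))
  -- pass to the limit
  have htend : Tendsto (fun k => |⟪(‖D (x (ψ k))‖)⁻¹ • D (x (ψ k)), g (ψ k)⟫|) atTop
      (𝓝 |⟪w, ν⟫|) := (hWw.inner hgν').abs
  have hge : (1:ℝ) ≤ |⟪w, ν⟫| := by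
    apply le_of_tendsto_of_tendsto' (aux_tendsto_beta.comp hψmono.tendsto_atTop) htend
    intro k
    exact hγ (ψ k)
  have hle : |⟪w, ν⟫| ≤ 1 := by
    have := abs_real_inner_le_norm w ν
    rw [hwnorm, hνnorm] at this
    linarith
  have heq : |⟪w, ν⟫| = 1 := le_antisymm hle hge
  rcases (abs_eq (by norm_num : (0:ℝ) ≤ 1)).1 heq with h1 | h1
  · have : w = ν := (inner_eq_one_iff_of_norm_eq_one hwnorm hνnorm).1 h1
    rw [← this] at hνmem
    exact (hV v hvΛ).1 hνmem
  · have h2 : ⟪-w, ν⟫ = 1 := by rw [inner_neg_left, h1]; ring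
    have hmw : ‖-w‖ = 1 := by rw [norm_neg]; exact hwnorm
    have : -w = ν := (inner_eq_one_iff_of_norm_eq_one hmw hνnorm).1 h2
    rw [← this] at hνmem
    exact (hV v hvΛ).2 hνmem


/-- Let `f : ℝⁿ → ℝ` be `C¹`, `c ∈ ℝ`, `Λ⁺` a finite set of unit vectors, and `A` a diagonal
matrix with positive, pairwise distinct diagonal entries, such that no element of
`X_c^{∞,+}` is an eigenvector of `A` and, for each `u ∈ Λ⁺`, neither `Au/‖Au‖` nor
`−Au/‖Au‖` belongs to `V(u)`.  Then there exist `α, β, γ ∈ (0,1)`, `R > 0`, `ε > 0`,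
`η > 0` such that for every `x` with `‖x‖ > R` and `|f(x) − c| < ε`:
(i) `α‖x‖ < ⟨Ax/‖Ax‖, x⟩ < β‖x‖`; and (ii) for each `u ∈ Λ⁺` with `‖x/‖x‖ − u‖ < η`,
if `∇f(x) ≠ 0` then `|⟨Ax/‖Ax‖, ∇f(x)/‖∇f(x)‖⟩| < γ`. -/
theorem statement10 {n : ℕ} (f : EuclideanSpace ℝ (Fin n) → ℝ) (hf : ContDiff ℝ 1 f)
    (c : ℝ) (Λ : Finset (EuclideanSpace ℝ (Fin n))) (hΛ : ∀ u ∈ Λ, ‖u‖ = 1)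
    (dvec : Fin n → ℝ) (hpos : ∀ i, 0 < dvec i) (hinj : Function.Injective dvec)
    (heig : ∀ u ∈ dirsAtInfinity f c, ∀ t : ℝ,
      matApply (Matrix.diagonal dvec) u ≠ t • u)
    (hV : ∀ u ∈ Λ,
      (‖matApply (Matrix.diagonal dvec) u‖)⁻¹ • matApply (Matrix.diagonal dvec) u
        ∉ limGradDirs f c u ∧
      -((‖matApply (Matrix.diagonal dvec) u‖)⁻¹ • matApply (Matrix.diagonal dvec) u)
        ∉ limGradDirs f c u) :
    ∃ α ∈ Set.Ioo (0:ℝ) 1, ∃ β ∈ Set.Ioo (0:ℝ) 1, ∃ γ ∈ Set.Ioo (0:ℝ) 1,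
      ∃ R > (0:ℝ), ∃ ε > (0:ℝ), ∃ η > (0:ℝ),
      ∀ x : EuclideanSpace ℝ (Fin n), R < ‖x‖ → |f x - c| < ε →
        (α * ‖x‖ < ⟪(‖matApply (Matrix.diagonal dvec) x‖)⁻¹ • matApply (Matrix.diagonal dvec) x,
            x⟫ ∧
         ⟪(‖matApply (Matrix.diagonal dvec) x‖)⁻¹ • matApply (Matrix.diagonal dvec) x,
            x⟫ < β * ‖x‖) ∧
        ∀ u ∈ Λ, ‖(‖x‖)⁻¹ • x - u‖ < η → gradient f x ≠ 0 →
          |⟪(‖matApply (Matrix.diagonal dvec) x‖)⁻¹ • matApply (Matrix.diagonal dvec) x,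
             (‖gradient f x‖)⁻¹ • gradient f x⟫| < γ := by
  rcases Nat.eq_zero_or_pos n with hn | hn
  · subst hn
    refine ⟨1/2, by norm_num, 1/2, by norm_num, 1/2, by norm_num,
      1, one_pos, 1, one_pos, 1, one_pos, ?_⟩
    intro x hx _
    have hx0 : x = 0 := by ext i; exact i.elim0
    rw [hx0, norm_zero] at hx
    norm_num at hx
  haveI : NeZero n := ⟨hn.ne'⟩
  set a : ℝ := Finset.univ.inf' Finset.univ_nonempty dvec with hadef
  set b : ℝ := Finset.univ.sup' Finset.univ_nonempty dvec with hbdef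
  have ha : ∀ i, a ≤ dvec i := fun i => Finset.inf'_le _ (Finset.mem_univ i)
  have hb : ∀ i, dvec i ≤ b := fun i => Finset.le_sup' _ (Finset.mem_univ i)
  have hapos : 0 < a := by
    obtain ⟨i, _, hi⟩ := Finset.exists_mem_eq_inf' Finset.univ_nonempty dvec
    rw [hadef, hi]; exact hpos i
  have hab : a ≤ b := le_trans (ha ⟨0, hn⟩) (hb ⟨0, hn⟩)
  have hbpos : 0 < b := lt_of_lt_of_le hapos hab
  obtain ⟨β, hβIoo, R₂, hR₂, ε₂, hε₂, hβ⟩ := claimBeta f c dvec hpos heig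
  obtain ⟨γ, hγIoo, η, hη, R₃, hR₃, ε₃, hε₃, hγ⟩ := claimGamma f c Λ hΛ dvec hpos hV
  have hαIoo : a / (2*b) ∈ Set.Ioo (0:ℝ) 1 := by
    constructor
    · positivity
    · rw [div_lt_one (by positivity)]
      linarith
  refine ⟨a/(2*b), hαIoo, β, hβIoo, γ, hγIoo, max R₂ R₃, lt_max_of_lt_left hR₂,
    min ε₂ ε₃, lt_min hε₂ hε₃, η, hη, ?_⟩
  intro x hx hfx
  have hx2 : R₂ < ‖x‖ := lt_of_le_of_lt (le_max_left _ _) hx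
  have hx3 : R₃ < ‖x‖ := lt_of_le_of_lt (le_max_right _ _) hx
  have hf2 : |f x - c| < ε₂ := lt_of_lt_of_le hfx (min_le_left _ _)
  have hf3 : |f x - c| < ε₃ := lt_of_lt_of_le hfx (min_le_right _ _)
  have hxpos : 0 < ‖x‖ := lt_trans (lt_max_of_lt_left hR₂) hx
  have hxne : x ≠ 0 := norm_pos_iff.1 hxpos
  refine ⟨⟨?_, hβ x hx2 hf2⟩, fun u huΛ hd hg => hγ x hx3 hf3 u huΛ hd hg⟩
  -- the lower bound
  set D := matApply (Matrix.diagonal dvec) with hD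
  have hDne : D x ≠ 0 := matApply_ne_zero dvec hpos hxne
  have hN : 0 < ‖D x‖ := norm_pos_iff.2 hDne
  have hI : a * ‖x‖^2 ≤ ⟪D x, x⟫ := matApply_inner_self_ge dvec a ha x
  have hNb : ‖D x‖ ≤ b * ‖x‖ :=
    matApply_norm_le dvec b hbpos.le (fun i => by rw [abs_of_pos (hpos i)]; exact hb i) x
  rw [real_inner_smul_left]
  have h1 : (a/b) * ‖x‖ ≤ (‖D x‖)⁻¹ * ⟪D x, x⟫ := by
    calc (a/b) * ‖x‖ = (a * ‖x‖^2) / (b * ‖x‖) := by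
          field_simp
      _ ≤ (a * ‖x‖^2) / ‖D x‖ := by
          apply div_le_div_of_nonneg_left (by positivity) hN hNb
      _ ≤ ⟪D x, x⟫ / ‖D x‖ := by gcongr
      _ = (‖D x‖)⁻¹ * ⟪D x, x⟫ := by rw [div_eq_inv_mul]
  have h2 : a/(2*b) * ‖x‖ < (a/b) * ‖x‖ := by
    apply mul_lt_mul_of_pos_right ?_ hxpos
    rw [div_lt_div_iff₀ (by positivity) (by positivity)]
    nlinarith
  linarith
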